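/- KR-U confidence envelope in the online setting (Theorem 4.1, KR-U version): In the online setting, for any online procedure (α_k)_{k≥1} satisfying the conditional super-uniformity condition on the nulls, and for any δ ∈ (0,1), with probability at least 1 − δ, simultaneously for all k ≥ 1: FDP(R_k) ≤ 1 ∧ min_{a ∈ ℕ, a ≥ 1} { [ log(1/δ_a) / ( a log(1 + log(1/δ_a)/a) ) ] · ( a + Σ_{i=1}^k α_i ) / ( 1 ∨ R(k) ) }, where δ_a = δ/(κ a²). -/

import Mathlib

open MeasureTheory ProbabilityTheory Real Set

/-- The KR-type online constant `log(1/δ_a) / (a log(1 + log(1/δ_a)/a))`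
with `δ_a = δ/(κ a²)`, `κ = π²/6`. -/
noncomputable def KRconstOnline (δ : ℝ) (a : ℕ) : ℝ :=
  Real.log (1 / (δ / ((Real.pi ^ 2 / 6) * (a : ℝ) ^ 2)))
    / ((a : ℝ) * Real.log (1 + Real.log (1 / (δ / ((Real.pi ^ 2 / 6) * (a : ℝ) ^ 2))) / (a : ℝ)))

/-- Weighted constant-threshold bound from the condexp hypothesis. -/
lemma lemA {Ω : Type*} [MeasureSpace Ω]
    [IsProbabilityMeasure (ℙ : Measure Ω)]
    (Gf : ℕ → MeasurableSpace Ω) (j : ℕ)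
    (hle : (Gf j) ≤ (inferInstance : MeasurableSpace Ω))
    (q : Ω → ℝ) (hq : Measurable q) (x : ℝ) (hx : 0 ≤ x)
    (hsup : ∀ᵐ ω ∂(ℙ : Measure Ω),
      MeasureTheory.condExp (Gf j) ℙ (Set.indicator {ω' | q ω' ≤ x} (fun _ => (1:ℝ))) ω ≤ x)
    (h : Ω → ℝ) (hh : Measurable[(Gf j)] h) (hh0 : ∀ ω, 0 ≤ h ω) (C : ℝ) (hhC : ∀ ω, h ω ≤ C) :
    ∫ ω, h ω * Set.indicator {ω' | q ω' ≤ x} (fun _ => (1:ℝ)) ω ∂(ℙ : Measure Ω)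
      ≤ x * ∫ ω, h ω ∂(ℙ : Measure Ω) := by
  set f : Ω → ℝ := Set.indicator {ω' | q ω' ≤ x} (fun _ => (1:ℝ)) with hf
  have hsetmeas : MeasurableSet {ω' | q ω' ≤ x} := measurableSet_le hq measurable_const
  have hfmeas : Measurable f := (measurable_const.indicator hsetmeas)
  have hfbd : ∀ ω, ‖f ω‖ ≤ 1 := by
    intro ω
    by_cases hω : ω ∈ {ω' | q ω' ≤ x} <;> simp [hf, Set.indicator_apply, hω]
  have hfint : Integrable f ℙ :=
    (integrable_const (1:ℝ)).mono' hfmeas.aestronglyMeasurable (Filter.Eventually.of_forall hfbd)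
  have hhmeas : Measurable h := hh.mono hle le_rfl
  have hhCnorm : ∀ ω, ‖h ω‖ ≤ |C| := fun ω => by
    rw [Real.norm_eq_abs, abs_of_nonneg (hh0 ω)]; exact (hhC ω).trans (le_abs_self C)
  have hhint : Integrable h ℙ :=
    (integrable_const (|C|)).mono' hhmeas.aestronglyMeasurable
      (Filter.Eventually.of_forall hhCnorm)
  have hhf_int : Integrable (h * f) ℙ := by
    refine (integrable_const (|C|)).mono' (hhmeas.mul hfmeas).aestronglyMeasurable ?_
    refine Filter.Eventually.of_forall fun ω => ?_
    calc ‖h ω * f ω‖ = ‖h ω‖ * ‖f ω‖ := norm_mul _ _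
      _ ≤ |C| * 1 := mul_le_mul (hhCnorm ω) (hfbd ω) (norm_nonneg _) (abs_nonneg _)
      _ = |C| := mul_one _
  have hpull : (ℙ : Measure Ω)[h * f|(Gf j)] =ᵐ[ℙ] h * (ℙ : Measure Ω)[f|(Gf j)] :=
    condExp_mul_of_stronglyMeasurable_left hh.stronglyMeasurable hhf_int hfint
  have h1 : ∫ ω, (h * f) ω ∂(ℙ : Measure Ω)
      = ∫ ω, ((ℙ : Measure Ω)[h * f|(Gf j)]) ω ∂(ℙ : Measure Ω) :=
    (integral_condExp (f := h * f) hle).symm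
  have h2 : ∫ ω, ((ℙ : Measure Ω)[h * f|(Gf j)]) ω ∂(ℙ : Measure Ω)
      = ∫ ω, (h * (ℙ : Measure Ω)[f|(Gf j)]) ω ∂(ℙ : Measure Ω) := integral_congr_ae hpull
  have hint2 : Integrable (h * (ℙ : Measure Ω)[f|(Gf j)]) ℙ :=
    (integrable_condExp (m := (Gf j)) (f := h * f)).congr hpull
  have h3 : ∫ ω, (h * (ℙ : Measure Ω)[f|(Gf j)]) ω ∂(ℙ : Measure Ω)
      ≤ ∫ ω, x * h ω ∂(ℙ : Measure Ω) := by
    refine integral_mono_ae hint2 (hhint.const_mul x) ?_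
    filter_upwards [hsup] with ω hω
    simpa [mul_comm] using mul_le_mul_of_nonneg_left hω (hh0 ω)
  calc ∫ ω, h ω * f ω ∂(ℙ : Measure Ω) = ∫ ω, (h * f) ω ∂(ℙ : Measure Ω) := rfl
    _ ≤ ∫ ω, x * h ω ∂(ℙ : Measure Ω) := by rw [h1, h2]; exact h3
    _ = x * ∫ ω, h ω ∂(ℙ : Measure Ω) := integral_const_mul x h

lemma bnd_mul3 {h e i C : ℝ} (h0 : 0 ≤ h) (hC : h ≤ C) (e0 : 0 ≤ e) (e1 : e ≤ 1)
    (i0 : 0 ≤ i) (i1 : i ≤ 1) : ‖h * e * i‖ ≤ C := by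
  have hC0 : 0 ≤ C := h0.trans hC
  have h1 : h * e ≤ C := by
    calc h * e ≤ C * 1 := mul_le_mul hC e1 e0 hC0
      _ = C := mul_one _
  have h2 : 0 ≤ h * e := mul_nonneg h0 e0
  have h3 : h * e * i ≤ C := by
    calc h * e * i ≤ C * 1 := mul_le_mul h1 i1 i0 hC0
      _ = C := mul_one _
  rw [Real.norm_eq_abs, abs_of_nonneg (mul_nonneg h2 i0)]
  exact h3

/-- Weighted random-threshold bound. -/
lemma lemB {Ω : Type*} [MeasureSpace Ω]
    [IsProbabilityMeasure (ℙ : Measure Ω)]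
    (Gf : ℕ → MeasurableSpace Ω) (j : ℕ)
    (hle : (Gf j) ≤ (inferInstance : MeasurableSpace Ω))
    (q : Ω → ℝ) (hq : Measurable q)
    (α : Ω → ℝ) (hα : Measurable[(Gf j)] α) (hα01 : ∀ ω, α ω ∈ Set.Icc (0:ℝ) 1)
    (hsup : ∀ x ∈ Set.Icc (0:ℝ) 1, ∀ᵐ ω ∂(ℙ : Measure Ω),
      MeasureTheory.condExp (Gf j) ℙ (Set.indicator {ω' | q ω' ≤ x} (fun _ => (1:ℝ))) ω ≤ x)
    (h : Ω → ℝ) (hh : Measurable[(Gf j)] h) (hh0 : ∀ ω, 0 ≤ h ω) (C : ℝ) (hhC : ∀ ω, h ω ≤ C) :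
    ∫ ω, h ω * Set.indicator {ω' | q ω' ≤ α ω'} (fun _ => (1:ℝ)) ω ∂(ℙ : Measure Ω)
      ≤ ∫ ω, h ω * α ω ∂(ℙ : Measure Ω) := by
  classical
  have hhmeas : Measurable h := hh.mono hle le_rfl
  have hαmeas : Measurable α := hα.mono hle le_rfl
  set C' : ℝ := max C 0 with hC'
  have hhC' : ∀ ω, h ω ≤ C' := fun ω => (hhC ω).trans (le_max_left _ _)
  have hC'0 : 0 ≤ C' := le_max_right _ _
  have intg : ∀ (g : Ω → ℝ) (D : ℝ), Measurable g → (∀ ω, ‖g ω‖ ≤ D) →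
      Integrable g (ℙ : Measure Ω) := fun g D hg hD =>
    (integrable_const D).mono' hg.aestronglyMeasurable (Filter.Eventually.of_forall hD)
  set I : Ω → ℝ := Set.indicator {ω' | q ω' ≤ α ω'} (fun _ => (1:ℝ)) with hI
  have hImeas : Measurable I := by
    have : MeasurableSet {ω' | q ω' ≤ α ω'} := measurableSet_le hq hαmeas
    exact measurable_const.indicator this
  have hI01 : ∀ ω, 0 ≤ I ω ∧ I ω ≤ 1 := by
    intro ω
    by_cases hω : ω ∈ {ω' | q ω' ≤ α ω'} <;> simp [hI, Set.indicator_apply, hω]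
  have hint_hα : Integrable (fun ω => h ω * α ω) (ℙ : Measure Ω) := by
    refine intg _ C' (hhmeas.mul hαmeas) fun ω => ?_
    have := hα01 ω
    have h1 : h ω * α ω = h ω * α ω * 1 := by ring
    rw [h1]
    exact bnd_mul3 (hh0 ω) (hhC' ω) this.1 this.2 zero_le_one le_rfl
  have hint_h : Integrable h (ℙ : Measure Ω) := by
    refine intg _ C' hhmeas fun ω => ?_
    have h1 : h ω = h ω * 1 * 1 := by ring
    rw [h1]
    exact bnd_mul3 (hh0 ω) (hhC' ω) zero_le_one le_rfl zero_le_one le_rfl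
  have key : ∀ m : ℕ, 1 ≤ m →
      ∫ ω, h ω * I ω ∂(ℙ : Measure Ω)
        ≤ (∫ ω, h ω * α ω ∂(ℙ : Measure Ω)) + ((m : ℝ))⁻¹ * ∫ ω, h ω ∂(ℙ : Measure Ω) := by
    intro m hm
    have hm0 : (0:ℝ) < m := by exact_mod_cast hm
    set c : Ω → ℕ := fun ω => ⌈α ω * m⌉₊ with hc
    set B : ℕ → Set Ω := fun i => {ω | c ω = i} with hB
    have hcmeas : Measurable[(Gf j)] c :=
      Nat.measurable_ceil.comp (hα.mul_const (m:ℝ))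
    have hBmeas : ∀ i, MeasurableSet[(Gf j)] (B i) := fun i =>
      hcmeas (measurableSet_singleton i)
    have hcle : ∀ ω, c ω ≤ m := by
      intro ω
      refine Nat.ceil_le.mpr ?_
      calc α ω * m ≤ 1 * m := mul_le_mul_of_nonneg_right (hα01 ω).2 hm0.le
        _ = (m:ℝ) := one_mul _
    set e : ℕ → Ω → ℝ := fun i => Set.indicator (B i) (fun _ => (1:ℝ)) with he
    have hemeasG : ∀ i, Measurable[(Gf j)] (e i) := fun i =>
      measurable_const.indicator (hBmeas i)
    have hemeas : ∀ i, Measurable (e i) := fun i => (hemeasG i).mono hle le_rfl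
    have he01 : ∀ i ω, 0 ≤ e i ω ∧ e i ω ≤ 1 := by
      intro i ω
      by_cases hω : ω ∈ B i <;> simp [he, Set.indicator_apply, hω]
    have hpart : ∀ ω, ∑ i ∈ Finset.range (m+1), e i ω = 1 := by
      intro ω
      have hmem : c ω ∈ Finset.range (m+1) := Finset.mem_range.mpr (Nat.lt_succ_of_le (hcle ω))
      rw [Finset.sum_eq_single_of_mem (c ω) hmem]
      · simp [he, hB, Set.indicator_apply]
      · intro i _ hne
        simp only [he, hB, Set.indicator_apply, Set.mem_setOf_eq]
        rw [if_neg]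
        intro hcontr
        exact hne hcontr.symm
    have hαle : ∀ i ω, ω ∈ B i → α ω ≤ i / m := by
      intro i ω hω
      have h1 : α ω * m ≤ (c ω : ℝ) := Nat.le_ceil _
      have h2 : c ω = i := hω
      rw [h2] at h1
      exact (le_div_iff₀ hm0).mpr h1
    have hile : ∀ i ω, ω ∈ B i → (i : ℝ) / m ≤ α ω + (m:ℝ)⁻¹ := by
      intro i ω hω
      have h0 : (0:ℝ) ≤ α ω * m := mul_nonneg (hα01 ω).1 hm0.le
      have h1 : (c ω : ℝ) < α ω * m + 1 := Nat.ceil_lt_add_one h0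
      have h2 : c ω = i := hω
      rw [h2] at h1
      rw [div_le_iff₀ hm0]
      calc (i:ℝ) ≤ α ω * m + 1 := h1.le
        _ = (α ω + (m:ℝ)⁻¹) * m := by field_simp
    set J : ℕ → Ω → ℝ := fun i => Set.indicator {ω' | q ω' ≤ (i:ℝ)/m} (fun _ => (1:ℝ)) with hJ
    have hJmeas : ∀ i, Measurable (J i) :=
      fun i => measurable_const.indicator (measurableSet_le hq measurable_const)
    have hJ01 : ∀ i ω, 0 ≤ J i ω ∧ J i ω ≤ 1 := by
      intro i ω
      by_cases hω : ω ∈ {ω' | q ω' ≤ (i:ℝ)/m} <;> simp [hJ, Set.indicator_apply, hω]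
    have int1 : ∀ i, Integrable (fun ω => h ω * e i ω * I ω) (ℙ : Measure Ω) := fun i =>
      intg _ C' ((hhmeas.mul (hemeas i)).mul hImeas) fun ω =>
        bnd_mul3 (hh0 ω) (hhC' ω) (he01 i ω).1 (he01 i ω).2 (hI01 ω).1 (hI01 ω).2
    have int2 : ∀ i, Integrable (fun ω => h ω * e i ω * J i ω) (ℙ : Measure Ω) := fun i =>
      intg _ C' ((hhmeas.mul (hemeas i)).mul (hJmeas i)) fun ω =>
        bnd_mul3 (hh0 ω) (hhC' ω) (he01 i ω).1 (he01 i ω).2 (hJ01 i ω).1 (hJ01 i ω).2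
    have hαm0 : ∀ ω, (0:ℝ) ≤ α ω + (m:ℝ)⁻¹ := by
      intro ω
      have h1 := (hα01 ω).1
      have h2 : (0:ℝ) ≤ (m:ℝ)⁻¹ := inv_nonneg.mpr hm0.le
      linarith
    have hαm2 : ∀ ω, α ω + (m:ℝ)⁻¹ ≤ 2 := by
      intro ω
      have h1 := (hα01 ω).2
      have h2 : (m:ℝ)⁻¹ ≤ 1 := by
        nlinarith [mul_inv_cancel₀ (ne_of_gt hm0), inv_nonneg.mpr hm0.le,
          (by exact_mod_cast hm : (1:ℝ) ≤ (m:ℝ))]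
      linarith
    have int3 : ∀ i, Integrable (fun ω => h ω * e i ω * (α ω + (m:ℝ)⁻¹))
        (ℙ : Measure Ω) := by
      intro i
      refine intg _ (C' * 2) ((hhmeas.mul (hemeas i)).mul (hαmeas.add measurable_const))
        fun ω => ?_
      have hb : ‖h ω * e i ω * ((α ω + (m:ℝ)⁻¹)/2) * 2‖ ≤ C' * 2 := by
        rw [show h ω * e i ω * ((α ω + (m:ℝ)⁻¹)/2) * 2
            = (h ω * e i ω * ((α ω + (m:ℝ)⁻¹)/2)) * 2 from rfl, norm_mul]
        have := bnd_mul3 (hh0 ω) (hhC' ω) (he01 i ω).1 (he01 i ω).2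
          (by linarith [hαm0 ω] : (0:ℝ) ≤ (α ω + (m:ℝ)⁻¹)/2)
          (by linarith [hαm2 ω] : (α ω + (m:ℝ)⁻¹)/2 ≤ 1)
        calc ‖h ω * e i ω * ((α ω + (m:ℝ)⁻¹)/2)‖ * ‖(2:ℝ)‖
            = ‖h ω * e i ω * ((α ω + (m:ℝ)⁻¹)/2)‖ * 2 := by norm_num
          _ ≤ C' * 2 := by
              exact mul_le_mul_of_nonneg_right this (by norm_num)
      calc ‖h ω * e i ω * (α ω + (m:ℝ)⁻¹)‖
          = ‖h ω * e i ω * ((α ω + (m:ℝ)⁻¹)/2) * 2‖ := by ring_nf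
        _ ≤ C' * 2 := hb
    have int4 : ∀ i, Integrable (fun ω => h ω * e i ω) (ℙ : Measure Ω) := fun i =>
      intg _ C' (hhmeas.mul (hemeas i)) fun ω => by
        have h1 : h ω * e i ω = h ω * e i ω * 1 := by ring
        rw [h1]
        exact bnd_mul3 (hh0 ω) (hhC' ω) (he01 i ω).1 (he01 i ω).2 zero_le_one le_rfl
    -- decompose the integral along the partition
    have hdecomp : ∫ ω, h ω * I ω ∂(ℙ : Measure Ω)
        = ∑ i ∈ Finset.range (m+1), ∫ ω, h ω * e i ω * I ω ∂(ℙ : Measure Ω) := by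
      rw [← integral_finset_sum _ (fun i _ => int1 i)]
      refine integral_congr_ae (Filter.Eventually.of_forall fun ω => ?_)
      calc h ω * I ω = (∑ i ∈ Finset.range (m+1), e i ω) * (h ω * I ω) := by
            rw [hpart ω, one_mul]
        _ = ∑ i ∈ Finset.range (m+1), h ω * e i ω * I ω := by
            rw [Finset.sum_mul]
            exact Finset.sum_congr rfl fun i _ => by ring
    -- per-cell chain of inequalities
    have hcell : ∀ i ∈ Finset.range (m+1),
        ∫ ω, h ω * e i ω * I ω ∂(ℙ : Measure Ω)
          ≤ ∫ ω, h ω * e i ω * (α ω + (m:ℝ)⁻¹) ∂(ℙ : Measure Ω) := by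
      intro i hi
      have him : (i : ℝ) / m ∈ Set.Icc (0:ℝ) 1 := by
        constructor
        · positivity
        · rw [div_le_one hm0]
          exact_mod_cast Nat.lt_succ_iff.mp (Finset.mem_range.mp hi)
      have step1 : ∫ ω, h ω * e i ω * I ω ∂(ℙ : Measure Ω)
          ≤ ∫ ω, h ω * e i ω * J i ω ∂(ℙ : Measure Ω) := by
        refine integral_mono (int1 i) (int2 i) fun ω => ?_
        by_cases hω : ω ∈ B i
        · have hα' : α ω ≤ (i:ℝ)/m := hαle i ω hω
          have hIJ : I ω ≤ J i ω := by
            by_cases hq' : q ω ≤ α ω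
            · have : q ω ≤ (i:ℝ)/m := le_trans hq' hα'
              simp [hI, hJ, Set.indicator_apply, Set.mem_setOf_eq, hq', this]
            · have : I ω = 0 := by simp [hI, Set.indicator_apply, Set.mem_setOf_eq, hq']
              rw [this]
              exact (hJ01 i ω).1
          have hhe : 0 ≤ h ω * e i ω := mul_nonneg (hh0 ω) (he01 i ω).1
          exact mul_le_mul_of_nonneg_left hIJ hhe
        · have : e i ω = 0 := by simp [he, Set.indicator_apply, hω]
          simp [this]
      have step2 : ∫ ω, h ω * e i ω * J i ω ∂(ℙ : Measure Ω)
          ≤ ((i:ℝ)/m) * ∫ ω, h ω * e i ω ∂(ℙ : Measure Ω) := by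
        exact lemA Gf j hle q hq ((i:ℝ)/m) him.1 (hsup _ him)
          (fun ω => h ω * e i ω) (hh.mul (hemeasG i))
          (fun ω => mul_nonneg (hh0 ω) (he01 i ω).1) C'
          (fun ω => by
            calc h ω * e i ω ≤ C' * 1 :=
                mul_le_mul (hhC' ω) (he01 i ω).2 (he01 i ω).1 hC'0
              _ = C' := mul_one _)
      have step3 : ((i:ℝ)/m) * ∫ ω, h ω * e i ω ∂(ℙ : Measure Ω)
          ≤ ∫ ω, h ω * e i ω * (α ω + (m:ℝ)⁻¹) ∂(ℙ : Measure Ω) := by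
        rw [← integral_const_mul]
        refine integral_mono ((int4 i).const_mul _) (int3 i) fun ω => ?_
        by_cases hω : ω ∈ B i
        · have h1 : (i:ℝ)/m ≤ α ω + (m:ℝ)⁻¹ := hile i ω hω
          have hhe : 0 ≤ h ω * e i ω := mul_nonneg (hh0 ω) (he01 i ω).1
          calc (i:ℝ)/m * (h ω * e i ω) = (h ω * e i ω) * ((i:ℝ)/m) := by ring
            _ ≤ (h ω * e i ω) * (α ω + (m:ℝ)⁻¹) := mul_le_mul_of_nonneg_left h1 hhe
            _ = h ω * e i ω * (α ω + (m:ℝ)⁻¹) := rfl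
        · have : e i ω = 0 := by simp [he, Set.indicator_apply, hω]
          simp [this]
      exact le_trans step1 (le_trans step2 step3)
    -- recombine
    have hrecomb : ∑ i ∈ Finset.range (m+1),
        ∫ ω, h ω * e i ω * (α ω + (m:ℝ)⁻¹) ∂(ℙ : Measure Ω)
        = (∫ ω, h ω * α ω ∂(ℙ : Measure Ω)) + ((m : ℝ))⁻¹ * ∫ ω, h ω ∂(ℙ : Measure Ω) := by
      rw [← integral_finset_sum _ (fun i _ => int3 i)]
      have hptw : ∀ ω, (∑ i ∈ Finset.range (m+1), h ω * e i ω * (α ω + (m:ℝ)⁻¹))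
          = h ω * α ω + (m:ℝ)⁻¹ * h ω := by
        intro ω
        calc (∑ i ∈ Finset.range (m+1), h ω * e i ω * (α ω + (m:ℝ)⁻¹))
            = (∑ i ∈ Finset.range (m+1), e i ω) * (h ω * (α ω + (m:ℝ)⁻¹)) := by
              rw [Finset.sum_mul]
              exact Finset.sum_congr rfl fun i _ => by ring
          _ = h ω * α ω + (m:ℝ)⁻¹ * h ω := by rw [hpart ω]; ring
      rw [integral_congr_ae (Filter.Eventually.of_forall hptw)]
      rw [integral_add hint_hα (hint_h.const_mul _)]
      rw [integral_const_mul]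
    calc ∫ ω, h ω * I ω ∂(ℙ : Measure Ω)
        = ∑ i ∈ Finset.range (m+1), ∫ ω, h ω * e i ω * I ω ∂(ℙ : Measure Ω) := hdecomp
      _ ≤ ∑ i ∈ Finset.range (m+1),
            ∫ ω, h ω * e i ω * (α ω + (m:ℝ)⁻¹) ∂(ℙ : Measure Ω) :=
          Finset.sum_le_sum hcell
      _ = _ := hrecomb
  -- let m → ∞
  refine le_of_forall_pos_le_add fun ε hε => ?_
  have hInt_nonneg : (0:ℝ) ≤ ∫ ω, h ω ∂(ℙ : Measure Ω) :=
    integral_nonneg fun ω => hh0 ω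
  obtain ⟨m, hm⟩ := exists_nat_gt ((∫ ω, h ω ∂(ℙ : Measure Ω)) / ε)
  have hm1 : 1 ≤ m := by
    by_contra hcon
    push_neg at hcon
    interval_cases m
    simp only [Nat.cast_zero] at hm
    have : (0:ℝ) ≤ (∫ ω, h ω ∂(ℙ : Measure Ω)) / ε := div_nonneg hInt_nonneg hε.le
    linarith
  have hm0 : (0:ℝ) < m := by exact_mod_cast hm1
  have hlast : ((m : ℝ))⁻¹ * ∫ ω, h ω ∂(ℙ : Measure Ω) ≤ ε := by
    rw [inv_mul_le_iff₀ hm0]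
    calc ∫ ω, h ω ∂(ℙ : Measure Ω) = ((∫ ω, h ω ∂(ℙ : Measure Ω)) / ε) * ε := by
          field_simp
      _ ≤ (m:ℝ) * ε := mul_le_mul_of_nonneg_right hm.le hε.le
  exact (key m hm1).trans (by linarith)

/-- The multiplicative increment of the KR supermartingale. -/
noncomputable def KRfac {Ω : Type*} (β : ℝ) (p a : ℕ → Ω → ℝ) (H0 : Set ℕ)
    [DecidablePred (· ∈ H0)] (i : ℕ) (ω : Ω) : ℝ :=
  if i ∈ H0 then
    (1 + β * Set.indicator {ω' | p i ω' ≤ a i ω'} (fun _ => (1:ℝ)) ω)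
      * Real.exp (-(β * a i ω))
  else 1

/-- The KR supermartingale. -/
noncomputable def KRmart {Ω : Type*} (β : ℝ) (p a : ℕ → Ω → ℝ) (H0 : Set ℕ)
    [DecidablePred (· ∈ H0)] (k : ℕ) (ω : Ω) : ℝ :=
  ∏ i ∈ Finset.Icc 1 k, KRfac β p a H0 i ω

section infra

variable {Ω : Type*} [MeasureSpace Ω]
    (p : ℕ → Ω → ℝ) (a : ℕ → Ω → ℝ) (H0 : Set ℕ) [DecidablePred (· ∈ H0)]
    (G : ℕ → MeasurableSpace Ω)

lemma Gmono (hG : ∀ k, G k = MeasurableSpace.generateFrom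
    {A | ∃ i, 1 ≤ i ∧ i ≤ k ∧ A = {ω | p i ω ≤ a i ω}}) : Monotone G := by
  intro k l hkl
  rw [hG k, hG l]
  refine MeasurableSpace.generateFrom_mono ?_
  rintro A ⟨i, h1, h2, h3⟩
  exact ⟨i, h1, h2.trans hkl, h3⟩

lemma Gle (hpmeas : ∀ k, Measurable (p k))
    (hG : ∀ k, G k = MeasurableSpace.generateFrom
      {A | ∃ i, 1 ≤ i ∧ i ≤ k ∧ A = {ω | p i ω ≤ a i ω}})
    (hpred : ∀ k, 1 ≤ k → @Measurable Ω ℝ (G (k - 1)) _ (a k)) :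
    ∀ k, G k ≤ (inferInstance : MeasurableSpace Ω) := by
  intro k
  induction k using Nat.strong_induction_on with
  | _ k ih =>
    rw [hG k]
    refine MeasurableSpace.generateFrom_le ?_
    rintro A ⟨i, h1, h2, rfl⟩
    have hik : i - 1 < k := by omega
    have hai : Measurable (a i) := (hpred i h1).mono (ih _ hik) le_rfl
    exact measurableSet_le (hpmeas i) hai

lemma measX (hG : ∀ k, G k = MeasurableSpace.generateFrom
    {A | ∃ i, 1 ≤ i ∧ i ≤ k ∧ A = {ω | p i ω ≤ a i ω}})
    (i k : ℕ) (h1 : 1 ≤ i) (h2 : i ≤ k) :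
    MeasurableSet[G k] {ω | p i ω ≤ a i ω} := by
  rw [hG k]
  exact MeasurableSpace.measurableSet_generateFrom ⟨i, h1, h2, rfl⟩

lemma measKRfac (β : ℝ)
    (hG : ∀ k, G k = MeasurableSpace.generateFrom
      {A | ∃ i, 1 ≤ i ∧ i ≤ k ∧ A = {ω | p i ω ≤ a i ω}})
    (hpred : ∀ k, 1 ≤ k → @Measurable Ω ℝ (G (k - 1)) _ (a k))
    (i k : ℕ) (h1 : 1 ≤ i) (h2 : i ≤ k) :
    Measurable[G k] (KRfac β p a H0 i) := by
  unfold KRfac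
  by_cases hi : i ∈ H0
  · simp only [hi, if_true]
    have hX : Measurable[G k] (Set.indicator {ω' | p i ω' ≤ a i ω'} (fun _ => (1:ℝ))) :=
      measurable_const.indicator (measX p a G hG i k h1 h2)
    have hai : Measurable[G k] (a i) := by
      refine (hpred i h1).mono (Gmono p a G hG ?_) le_rfl
      omega
    exact ((measurable_const.add (hX.const_mul β)).mul
      ((hai.const_mul β).neg.exp))
  · simp only [hi, if_false]
    exact measurable_const

lemma measKRmart (β : ℝ)
    (hG : ∀ k, G k = MeasurableSpace.generateFrom
      {A | ∃ i, 1 ≤ i ∧ i ≤ k ∧ A = {ω | p i ω ≤ a i ω}})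
    (hpred : ∀ k, 1 ≤ k → @Measurable Ω ℝ (G (k - 1)) _ (a k))
    (k : ℕ) : Measurable[G k] (KRmart β p a H0 k) := by
  unfold KRmart
  refine Finset.measurable_prod _ fun i hi => ?_
  obtain ⟨h1, h2⟩ := Finset.mem_Icc.mp hi
  exact measKRfac p a H0 G β hG hpred i k h1 h2

lemma KRfac_nonneg (β : ℝ) (hβ : 0 ≤ β) (i : ℕ) (ω : Ω) : 0 ≤ KRfac β p a H0 i ω := by
  unfold KRfac
  by_cases hi : i ∈ H0
  · simp only [hi, if_true]
    have h1 : (0:ℝ) ≤ Set.indicator {ω' | p i ω' ≤ a i ω'} (fun _ => (1:ℝ)) ω := by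
      by_cases hω : ω ∈ {ω' | p i ω' ≤ a i ω'} <;> simp [Set.indicator_apply, hω]
    positivity
  · simp [hi]

lemma KRfac_le (β : ℝ) (hβ : 0 ≤ β) (haval : ∀ k ω, a k ω ∈ Set.Icc (0:ℝ) 1)
    (i : ℕ) (ω : Ω) : KRfac β p a H0 i ω ≤ 1 + β := by
  unfold KRfac
  by_cases hi : i ∈ H0
  · simp only [hi, if_true]
    have h1 : Set.indicator {ω' | p i ω' ≤ a i ω'} (fun _ => (1:ℝ)) ω ≤ 1 := by
      by_cases hω : ω ∈ {ω' | p i ω' ≤ a i ω'} <;> simp [Set.indicator_apply, hω]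
    have h2 : Real.exp (-(β * a i ω)) ≤ 1 := by
      rw [Real.exp_le_one_iff]
      have := (haval i ω).1
      have : 0 ≤ β * a i ω := mul_nonneg hβ this
      linarith
    have h3 : 1 + β * Set.indicator {ω' | p i ω' ≤ a i ω'} (fun _ => (1:ℝ)) ω ≤ 1 + β := by
      nlinarith
    have h4 : (0:ℝ) ≤ 1 + β * Set.indicator {ω' | p i ω' ≤ a i ω'} (fun _ => (1:ℝ)) ω := by
      have : (0:ℝ) ≤ Set.indicator {ω' | p i ω' ≤ a i ω'} (fun _ => (1:ℝ)) ω := by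
        by_cases hω : ω ∈ {ω' | p i ω' ≤ a i ω'} <;> simp [Set.indicator_apply, hω]
      positivity
    calc (1 + β * Set.indicator {ω' | p i ω' ≤ a i ω'} (fun _ => (1:ℝ)) ω)
          * Real.exp (-(β * a i ω)) ≤ (1 + β) * 1 := by
            refine mul_le_mul h3 h2 (Real.exp_nonneg _) (by linarith)
      _ = 1 + β := mul_one _
  · simp only [hi, if_false]
    linarith

lemma KRmart_nonneg (β : ℝ) (hβ : 0 ≤ β) (k : ℕ) (ω : Ω) : 0 ≤ KRmart β p a H0 k ω :=
  Finset.prod_nonneg fun i _ => KRfac_nonneg p a H0 β hβ i ω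

lemma KRmart_le (β : ℝ) (hβ : 0 ≤ β) (haval : ∀ k ω, a k ω ∈ Set.Icc (0:ℝ) 1)
    (k : ℕ) (ω : Ω) : KRmart β p a H0 k ω ≤ (1 + β) ^ k := by
  unfold KRmart
  calc ∏ i ∈ Finset.Icc 1 k, KRfac β p a H0 i ω ≤ ∏ _i ∈ Finset.Icc 1 k, (1 + β) :=
      Finset.prod_le_prod (fun i _ => KRfac_nonneg p a H0 β hβ i ω)
        (fun i _ => KRfac_le p a H0 β hβ haval i ω)
    _ = (1 + β) ^ (Finset.Icc 1 k).card := Finset.prod_const _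
    _ ≤ (1 + β) ^ k := by
        refine pow_le_pow_right₀ (by linarith) ?_
        rw [Nat.card_Icc]
        omega

end infra

/-- Ville-type inequality for the KR supermartingale. -/
lemma villeKR {Ω : Type*} [MeasureSpace Ω] [IsProbabilityMeasure (ℙ : Measure Ω)]
    (p : ℕ → Ω → ℝ) (a : ℕ → Ω → ℝ) (H0 : Set ℕ) [DecidablePred (· ∈ H0)]
    (haval : ∀ k ω, a k ω ∈ Set.Icc (0:ℝ) 1)
    (hpmeas : ∀ k, Measurable (p k))
    (G : ℕ → MeasurableSpace Ω)
    (hG : ∀ k, G k = MeasurableSpace.generateFrom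
        {A | ∃ i, 1 ≤ i ∧ i ≤ k ∧ A = {ω | p i ω ≤ a i ω}})
    (hpred : ∀ k, 1 ≤ k → @Measurable Ω ℝ (G (k - 1)) _ (a k))
    (hsuper : ∀ k ∈ H0, 1 ≤ k → ∀ x ∈ Set.Icc (0:ℝ) 1,
      ∀ᵐ ω ∂(ℙ : Measure Ω),
        MeasureTheory.condExp (G (k - 1)) ℙ
          (Set.indicator {ω' | p k ω' ≤ x} (fun _ => (1:ℝ))) ω ≤ x)
    (β t : ℝ) (hβ : 0 < β) (ht : 0 < t) :
    (ℙ : Measure Ω) {ω | ∃ j, 1 ≤ j ∧ t ≤ KRmart β p a H0 j ω}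
      ≤ ENNReal.ofReal (1/t) := by
  classical
  have hle : ∀ k, G k ≤ (inferInstance : MeasurableSpace Ω) := Gle p a G hpmeas hG hpred
  have hGm : Monotone G := Gmono p a G hG
  set M : ℕ → Ω → ℝ := KRmart β p a H0 with hM
  have hMmeasG : ∀ k, Measurable[G k] (M k) := fun k => measKRmart p a H0 G β hG hpred k
  have hMmeas : ∀ k, Measurable (M k) := fun k => (hMmeasG k).mono (hle k) le_rfl
  have hM0 : ∀ k ω, 0 ≤ M k ω := fun k ω => KRmart_nonneg p a H0 β hβ.le k ω
  have hMle : ∀ k ω, M k ω ≤ (1+β)^k := fun k ω => KRmart_le p a H0 β hβ.le haval k ω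
  have intg : ∀ (g : Ω → ℝ) (D : ℝ), Measurable g → (∀ ω, ‖g ω‖ ≤ D) →
      Integrable g (ℙ : Measure Ω) := fun g D hg hD =>
    (integrable_const D).mono' hg.aestronglyMeasurable (Filter.Eventually.of_forall hD)
  -- the stopping region
  set Dp : ℕ → Set Ω := fun k => {ω | ∀ j ∈ Finset.Icc 1 k, M j ω < t} with hDp
  have hDpmeasG : ∀ k, MeasurableSet[G k] (Dp k) := by
    intro k
    have : Dp k = ⋂ j ∈ Finset.Icc 1 k, {ω | M j ω < t} := by
      ext ω; simp [hDp, Set.mem_iInter]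
    rw [this]
    refine MeasurableSet.biInter (Finset.countable_toSet _) fun j hj => ?_
    have hjk : j ≤ k := (Finset.mem_Icc.mp hj).2
    exact ((hMmeasG j).mono (hGm hjk) le_rfl) measurableSet_Iio
  have hDpmeas : ∀ k, MeasurableSet (Dp k) := fun k => hle k _ (hDpmeasG k)
  -- the stopped process
  set F : ℕ → Ω → ℝ := fun i ω => if ω ∈ Dp (i-1) then KRfac β p a H0 i ω else 1 with hF
  set N : ℕ → Ω → ℝ := fun k ω => ∏ i ∈ Finset.Icc 1 k, F i ω with hN
  have hFmeasG : ∀ i k, 1 ≤ i → i ≤ k → Measurable[G k] (F i) := by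
    intro i k h1 h2
    have hd : MeasurableSet[G k] (Dp (i-1)) := by
      have : G (i-1) ≤ G k := hGm (by omega)
      exact this _ (hDpmeasG (i-1))
    exact Measurable.ite hd (measKRfac p a H0 G β hG hpred i k h1 h2) measurable_const
  have hF0 : ∀ i ω, 0 ≤ F i ω := by
    intro i ω
    by_cases hd : ω ∈ Dp (i-1) <;>
      simp only [hF, hd, if_true, if_false] <;>
      first
        | exact KRfac_nonneg p a H0 β hβ.le i ω
        | norm_num
  have hFle : ∀ i ω, F i ω ≤ 1 + β := by
    intro i ω
    by_cases hd : ω ∈ Dp (i-1) <;> simp only [hF, hd, if_true, if_false]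
    · exact KRfac_le p a H0 β hβ.le haval i ω
    · linarith
  have hNmeasG : ∀ k, Measurable[G k] (N k) := by
    intro k
    refine Finset.measurable_prod _ fun i hi => ?_
    obtain ⟨h1, h2⟩ := Finset.mem_Icc.mp hi
    exact hFmeasG i k h1 h2
  have hNmeas : ∀ k, Measurable (N k) := fun k => (hNmeasG k).mono (hle k) le_rfl
  have hN0 : ∀ k ω, 0 ≤ N k ω := fun k ω => Finset.prod_nonneg fun i _ => hF0 i ω
  have hNle : ∀ k ω, N k ω ≤ (1+β)^k := by
    intro k ω
    calc N k ω ≤ ∏ _i ∈ Finset.Icc 1 k, (1 + β) :=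
        Finset.prod_le_prod (fun i _ => hF0 i ω) (fun i _ => hFle i ω)
      _ = (1 + β) ^ (Finset.Icc 1 k).card := Finset.prod_const _
      _ ≤ (1 + β) ^ k := by
          refine pow_le_pow_right₀ (by linarith) ?_
          rw [Nat.card_Icc]; omega
  have hNnorm : ∀ k ω, ‖N k ω‖ ≤ (1+β)^k := by
    intro k ω
    rw [Real.norm_eq_abs, abs_of_nonneg (hN0 k ω)]
    exact hNle k ω
  have hNint : ∀ k, Integrable (N k) (ℙ : Measure Ω) := fun k =>
    intg _ _ (hNmeas k) (hNnorm k)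
  -- expectation of the stopped process
  have hEN : ∀ k, ∫ ω, N k ω ∂(ℙ : Measure Ω) ≤ 1 := by
    intro k
    induction k with
    | zero =>
      have : ∀ ω, N 0 ω = 1 := by
        intro ω; simp [hN]
      rw [integral_congr_ae (Filter.Eventually.of_forall this)]
      simp
    | succ k ih =>
      by_cases hmem : (k+1) ∈ H0
      · -- the nontrivial supermartingale step
        set X : Ω → ℝ := Set.indicator {ω' | p (k+1) ω' ≤ a (k+1) ω'} (fun _ => (1:ℝ)) with hX
        set E : Ω → ℝ := fun ω => Real.exp (-(β * a (k+1) ω)) with hE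
        set d : Ω → ℝ := Set.indicator (Dp k) (N k) with hd
        have hak : Measurable[G k] (a (k+1)) := by
          have := hpred (k+1) (by omega)
          simpa using this
        have hakm : Measurable (a (k+1)) := hak.mono (hle k) le_rfl
        have hEmeasG : Measurable[G k] E := ((hak.const_mul β).neg).exp
        have hEmeas : Measurable E := hEmeasG.mono (hle k) le_rfl
        have hE01 : ∀ ω, 0 < E ω ∧ E ω ≤ 1 := by
          intro ω
          constructor
          · exact Real.exp_pos _
          · rw [hE, Real.exp_le_one_iff]
            have h1 := (haval (k+1) ω).1
            have : 0 ≤ β * a (k+1) ω := mul_nonneg hβ.le h1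
            linarith
        have hdmeasG : Measurable[G k] d := (hNmeasG k).indicator (hDpmeasG k)
        have hdmeas : Measurable d := hdmeasG.mono (hle k) le_rfl
        have hd0 : ∀ ω, 0 ≤ d ω := by
          intro ω
          by_cases hω : ω ∈ Dp k <;> simp [hd, Set.indicator_apply, hω, hN0 k ω]
        have hdle : ∀ ω, d ω ≤ (1+β)^k := by
          intro ω
          by_cases hω : ω ∈ Dp k <;> simp [hd, Set.indicator_apply, hω]
          · exact hNle k ω
          · positivity
        -- pointwise decomposition
        have hptw : ∀ ω, N (k+1) ω
            = N k ω + (d ω * (E ω - 1) + (d ω * (β * E ω)) * X ω) := by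
          intro ω
          have hsplit : N (k+1) ω = N k ω * F (k+1) ω :=
            Finset.prod_Icc_succ_top (by omega) _
          rw [hsplit]
          by_cases hω : ω ∈ Dp k
          · have hFval : F (k+1) ω = KRfac β p a H0 (k+1) ω := by
              simp only [hF, Nat.add_sub_cancel, hω, if_true]
            have hdval : d ω = N k ω := by simp [hd, Set.indicator_apply, hω]
            rw [hFval, hdval]
            unfold KRfac
            rw [if_pos hmem]
            ring
          · have hFval : F (k+1) ω = 1 := by
              simp only [hF, Nat.add_sub_cancel, hω, if_false]
            have hdval : d ω = 0 := by simp [hd, Set.indicator_apply, hω]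
            rw [hFval, hdval]
            ring
        -- integrability of the pieces
        have int_d1 : Integrable (fun ω => d ω * (E ω - 1)) (ℙ : Measure Ω) := by
          refine intg _ ((1+β)^k * 1) (hdmeas.mul (hEmeas.sub measurable_const)) fun ω => ?_
          rw [norm_mul]
          refine mul_le_mul ?_ ?_ (norm_nonneg _) (by positivity)
          · rw [Real.norm_eq_abs, abs_of_nonneg (hd0 ω)]; exact hdle ω
          · rw [Real.norm_eq_abs, abs_le]
            have := hE01 ω
            constructor <;> [linarith [this.1.le]; linarith [this.2]]
        have int_d2X : Integrable (fun ω => (d ω * (β * E ω)) * X ω) (ℙ : Measure Ω) := by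
          refine intg _ ((1+β)^k * β)
            (((hdmeas.mul (hEmeas.const_mul β))).mul
              (measurable_const.indicator (measurableSet_le (hpmeas (k+1)) hakm))) fun ω => ?_
          have hX01 : 0 ≤ X ω ∧ X ω ≤ 1 := by
            by_cases hω : ω ∈ {ω' | p (k+1) ω' ≤ a (k+1) ω'} <;>
              simp [hX, Set.indicator_apply, hω]
          have h1 : d ω * (β * E ω) * X ω = (d ω * E ω * X ω) * β := by ring
          rw [h1, norm_mul]
          refine mul_le_mul ?_ (le_of_eq (by rw [Real.norm_eq_abs, abs_of_pos hβ]))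
            (norm_nonneg _) (by positivity)
          exact bnd_mul3 (hd0 ω) (hdle ω) (hE01 ω).1.le (hE01 ω).2 hX01.1 hX01.2
        have int_d2a : Integrable (fun ω => (d ω * (β * E ω)) * a (k+1) ω)
            (ℙ : Measure Ω) := by
          refine intg _ ((1+β)^k * β)
            (((hdmeas.mul (hEmeas.const_mul β))).mul hakm) fun ω => ?_
          have ha01 := haval (k+1) ω
          have h1 : d ω * (β * E ω) * a (k+1) ω = (d ω * E ω * a (k+1) ω) * β := by ring
          rw [h1, norm_mul]
          refine mul_le_mul ?_ (le_of_eq (by rw [Real.norm_eq_abs, abs_of_pos hβ]))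
            (norm_nonneg _) (by positivity)
          exact bnd_mul3 (hd0 ω) (hdle ω) (hE01 ω).1.le (hE01 ω).2 ha01.1 ha01.2
        -- the conditional super-uniformity bound
        have hsup' : ∀ x ∈ Set.Icc (0:ℝ) 1, ∀ᵐ ω ∂(ℙ : Measure Ω),
            MeasureTheory.condExp (G k) ℙ
              (Set.indicator {ω' | p (k+1) ω' ≤ x} (fun _ => (1:ℝ))) ω ≤ x := by
          intro x hx
          have := hsuper (k+1) hmem (by omega) x hx
          simpa using this
        have hstep : ∫ ω, (d ω * (β * E ω)) * X ω ∂(ℙ : Measure Ω)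
            ≤ ∫ ω, (d ω * (β * E ω)) * a (k+1) ω ∂(ℙ : Measure Ω) := by
          refine lemB G k (hle k) (p (k+1)) (hpmeas (k+1)) (a (k+1)) hak (haval (k+1))
            hsup' (fun ω => d ω * (β * E ω)) (hdmeasG.mul (hEmeasG.const_mul β))
            (fun ω => mul_nonneg (hd0 ω) (mul_nonneg hβ.le (hE01 ω).1.le))
            ((1+β)^k * β) (fun ω => ?_)
          calc d ω * (β * E ω) = β * (d ω * E ω) := by ring
            _ ≤ β * ((1+β)^k * 1) := by
                refine mul_le_mul_of_nonneg_left ?_ hβ.le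
                exact mul_le_mul (hdle ω) (hE01 ω).2 (hE01 ω).1.le (by positivity)
            _ = (1+β)^k * β := by ring
        -- the negative drift
        have hdrift : ∫ ω, d ω * (E ω - 1) ∂(ℙ : Measure Ω)
            + ∫ ω, (d ω * (β * E ω)) * a (k+1) ω ∂(ℙ : Measure Ω) ≤ 0 := by
          rw [← integral_add int_d1 int_d2a]
          refine integral_nonpos fun ω => ?_
          have h1 : E ω * (1 + β * a (k+1) ω) ≤ 1 := by
            have h2 : 1 + β * a (k+1) ω ≤ Real.exp (β * a (k+1) ω) := by
              linarith [Real.add_one_le_exp (β * a (k+1) ω)]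
            calc E ω * (1 + β * a (k+1) ω)
                ≤ E ω * Real.exp (β * a (k+1) ω) :=
                  mul_le_mul_of_nonneg_left h2 (hE01 ω).1.le
              _ = 1 := by
                  show Real.exp (-(β * a (k+1) ω)) * Real.exp (β * a (k+1) ω) = 1
                  rw [← Real.exp_add]
                  ring_nf
                  exact Real.exp_zero
          have h3 : E ω - 1 + β * E ω * a (k+1) ω ≤ 0 := by nlinarith
          calc d ω * (E ω - 1) + d ω * (β * E ω) * a (k+1) ω
              = d ω * (E ω - 1 + β * E ω * a (k+1) ω) := by ring
            _ ≤ d ω * 0 := mul_le_mul_of_nonneg_left h3 (hd0 ω)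
            _ = 0 := mul_zero _
        have hsum : ∫ ω, N (k+1) ω ∂(ℙ : Measure Ω)
            = ∫ ω, (N k ω + (d ω * (E ω - 1) + (d ω * (β * E ω)) * X ω)) ∂(ℙ : Measure Ω) :=
          integral_congr_ae (Filter.Eventually.of_forall hptw)
        have e1 : ∫ ω, (N k ω + (d ω * (E ω - 1) + (d ω * (β * E ω)) * X ω)) ∂(ℙ : Measure Ω)
            = (∫ ω, N k ω ∂(ℙ : Measure Ω))
              + ∫ ω, (d ω * (E ω - 1) + (d ω * (β * E ω)) * X ω) ∂(ℙ : Measure Ω) :=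
          integral_add (hNint k) (int_d1.add int_d2X)
        have e2 : ∫ ω, (d ω * (E ω - 1) + (d ω * (β * E ω)) * X ω) ∂(ℙ : Measure Ω)
            = (∫ ω, d ω * (E ω - 1) ∂(ℙ : Measure Ω))
              + ∫ ω, (d ω * (β * E ω)) * X ω ∂(ℙ : Measure Ω) :=
          integral_add int_d1 int_d2X
        calc ∫ ω, N (k+1) ω ∂(ℙ : Measure Ω)
            = ∫ ω, N k ω ∂(ℙ : Measure Ω)
              + (∫ ω, d ω * (E ω - 1) ∂(ℙ : Measure Ω)
                + ∫ ω, (d ω * (β * E ω)) * X ω ∂(ℙ : Measure Ω)) := by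
              rw [hsum, e1, e2]
          _ ≤ ∫ ω, N k ω ∂(ℙ : Measure Ω)
              + (∫ ω, d ω * (E ω - 1) ∂(ℙ : Measure Ω)
                + ∫ ω, (d ω * (β * E ω)) * a (k+1) ω ∂(ℙ : Measure Ω)) := by
              linarith [hstep]
          _ ≤ ∫ ω, N k ω ∂(ℙ : Measure Ω) + 0 := by linarith [hdrift]
          _ ≤ 1 := by linarith [ih]
      · -- trivial step outside H0
        have : ∀ ω, N (k+1) ω = N k ω := by
          intro ω
          have hsplit : N (k+1) ω = N k ω * F (k+1) ω :=
            Finset.prod_Icc_succ_top (by omega) _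
          have hfac : KRfac β p a H0 (k+1) ω = 1 := by
            unfold KRfac; rw [if_neg hmem]
          have hFval : F (k+1) ω = 1 := by
            by_cases hω : ω ∈ Dp k <;>
              simp only [hF, Nat.add_sub_cancel, hω, if_true, if_false, hfac]
          rw [hsplit, hFval, mul_one]
        rw [integral_congr_ae (Filter.Eventually.of_forall this)]
        exact ih
  -- Markov inequality on each finite horizon
  set EK : ℕ → Set Ω := fun K => {ω | ∃ j ∈ Finset.Icc 1 K, t ≤ M j ω} with hEK
  have hEKmeas : ∀ K, MeasurableSet (EK K) := by
    intro K
    have : EK K = ⋃ j ∈ Finset.Icc 1 K, {ω | t ≤ M j ω} := by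
      ext ω; simp [hEK]
    rw [this]
    exact MeasurableSet.biUnion (Finset.countable_toSet _) fun j _ =>
      (hMmeas j) measurableSet_Ici
  have hstopped : ∀ K ω, ω ∈ EK K → t ≤ N K ω := by
    intro K ω hω
    set S : Finset ℕ := (Finset.Icc 1 K).filter (fun j => t ≤ M j ω) with hS
    have hSne : S.Nonempty := by
      obtain ⟨j, hj1, hj2⟩ := hω
      exact ⟨j, Finset.mem_filter.mpr ⟨hj1, hj2⟩⟩
    set k0 : ℕ := S.min' hSne with hk0
    have hk0S : k0 ∈ S := Finset.min'_mem _ _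
    obtain ⟨hk0Icc, hk0t⟩ := Finset.mem_filter.mp hk0S
    obtain ⟨hk01, hk0K⟩ := Finset.mem_Icc.mp hk0Icc
    have hmin : ∀ j ∈ Finset.Icc 1 K, j < k0 → M j ω < t := by
      intro j hj hjlt
      by_contra hcon
      push_neg at hcon
      have : j ∈ S := Finset.mem_filter.mpr ⟨hj, hcon⟩
      exact absurd (Finset.min'_le _ _ this) (by omega)
    have hIoc : ∀ n : ℕ, Finset.Icc 1 n = Finset.Ioc 0 n := by
      intro n; ext x; simp [Nat.lt_iff_add_one_le]
    have hsplit : (∏ i ∈ Finset.Ioc 0 k0, F i ω) * ∏ i ∈ Finset.Ioc k0 K, F i ω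
        = ∏ i ∈ Finset.Ioc 0 K, F i ω :=
      Finset.prod_Ioc_consecutive _ (Nat.zero_le _) hk0K
    have htail : ∀ i ∈ Finset.Ioc k0 K, F i ω = 1 := by
      intro i hi
      obtain ⟨hi1, hi2⟩ := Finset.mem_Ioc.mp hi
      have hnot : ω ∉ Dp (i-1) := by
        intro hcon
        have hk0mem : k0 ∈ Finset.Icc 1 (i-1) := Finset.mem_Icc.mpr ⟨hk01, by omega⟩
        exact absurd (hcon k0 hk0mem) (not_lt.mpr hk0t)
      simp only [hF, hnot, if_false]
    have hhead : ∀ i ∈ Finset.Ioc 0 k0, F i ω = KRfac β p a H0 i ω := by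
      intro i hi
      obtain ⟨hi1, hi2⟩ := Finset.mem_Ioc.mp hi
      have hin : ω ∈ Dp (i-1) := by
        intro j hj
        obtain ⟨hj1, hj2⟩ := Finset.mem_Icc.mp hj
        refine hmin j (Finset.mem_Icc.mpr ⟨hj1, by omega⟩) (by omega)
      simp only [hF, hin, if_true]
    have hNval : N K ω = M k0 ω := by
      calc N K ω = ∏ i ∈ Finset.Ioc 0 K, F i ω := by
            show ∏ i ∈ Finset.Icc 1 K, F i ω = _
            rw [hIoc K]
        _ = (∏ i ∈ Finset.Ioc 0 k0, F i ω) * ∏ i ∈ Finset.Ioc k0 K, F i ω := hsplit.symm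
        _ = (∏ i ∈ Finset.Ioc 0 k0, F i ω) * 1 := by rw [Finset.prod_congr rfl htail]; simp
        _ = ∏ i ∈ Finset.Ioc 0 k0, KRfac β p a H0 i ω := by
            rw [mul_one]; exact Finset.prod_congr rfl hhead
        _ = M k0 ω := by
            show _ = KRmart β p a H0 k0 ω
            unfold KRmart
            rw [hIoc k0]
    rw [hNval]
    exact hk0t
  have hmarkov : ∀ K, (ℙ : Measure Ω) (EK K) ≤ ENNReal.ofReal (1/t) := by
    intro K
    have hlow : ∫ ω, Set.indicator (EK K) (fun _ => t) ω ∂(ℙ : Measure Ω)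
        ≤ ∫ ω, N K ω ∂(ℙ : Measure Ω) := by
      refine integral_mono ?_ (hNint K) fun ω => ?_
      · exact (integrable_const t).indicator (hEKmeas K)
      · by_cases hω : ω ∈ EK K
        · rw [Set.indicator_of_mem hω]
          exact hstopped K ω hω
        · rw [Set.indicator_of_notMem hω]
          exact hN0 K ω
    rw [integral_indicator_const _ (hEKmeas K)] at hlow
    have h2 : ((ℙ : Measure Ω) (EK K)).toReal * t ≤ 1 := by
      have := hlow.trans (hEN K)
      simpa [smul_eq_mul, measureReal_def] using this
    have h3 : ((ℙ : Measure Ω) (EK K)).toReal ≤ 1/t := by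
      rw [le_div_iff₀ ht]
      exact h2
    exact (ENNReal.le_ofReal_iff_toReal_le (measure_ne_top _ _) (by positivity)).mpr h3
  -- pass to the union over horizons
  have hcover : {ω | ∃ j, 1 ≤ j ∧ t ≤ M j ω} = ⋃ K, EK K := by
    ext ω
    simp only [Set.mem_setOf_eq, Set.mem_iUnion, hEK, Finset.mem_Icc]
    constructor
    · rintro ⟨j, hj1, hj2⟩
      exact ⟨j, j, ⟨hj1, le_rfl⟩, hj2⟩
    · rintro ⟨K, j, ⟨hj1, _⟩, hj2⟩
      exact ⟨j, hj1, hj2⟩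
  rw [hcover]
  have hmono : Monotone EK := by
    intro K L hKL ω
    rintro ⟨j, hj, hjt⟩
    refine ⟨j, ?_, hjt⟩
    rw [Finset.mem_Icc] at hj ⊢
    omega
  rw [Directed.measure_iUnion hmono.directed_le]
  exact iSup_le hmarkov

lemma constants_facts (δ : ℝ) (hδ : δ ∈ Set.Ioo (0:ℝ) 1) (n : ℕ) (hn : 1 ≤ n) :
    0 < Real.pi ^ 2 / 6 * (n:ℝ)^2 ∧
    0 < δ / (Real.pi ^ 2 / 6 * (n:ℝ)^2) ∧
    δ / (Real.pi ^ 2 / 6 * (n:ℝ)^2) < 1 ∧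
    0 < Real.log (1 / (δ / ((Real.pi ^ 2 / 6) * (n : ℝ) ^ 2))) := by
  obtain ⟨hδ0, hδ1⟩ := hδ
  have hn0 : (0:ℝ) < n := by exact_mod_cast hn
  have hπ : (3:ℝ) < Real.pi := Real.pi_gt_three
  have hκ : (1:ℝ) < Real.pi ^ 2 / 6 := by nlinarith
  have hn1 : (1:ℝ) ≤ (n:ℝ) := by exact_mod_cast hn
  have h1 : (1:ℝ) ≤ (n:ℝ)^2 := by nlinarith
  have hκn : (1:ℝ) < Real.pi ^ 2 / 6 * (n:ℝ)^2 := by nlinarith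
  have hκn0 : (0:ℝ) < Real.pi ^ 2 / 6 * (n:ℝ)^2 := by linarith
  have hδa0 : 0 < δ / (Real.pi ^ 2 / 6 * (n:ℝ)^2) := div_pos hδ0 hκn0
  have hδa1 : δ / (Real.pi ^ 2 / 6 * (n:ℝ)^2) < 1 := by
    rw [div_lt_one hκn0]
    linarith
  refine ⟨hκn0, hδa0, hδa1, Real.log_pos ?_⟩
  rw [lt_div_iff₀ hδa0, one_mul]
  linarith

/-- Deterministic extraction of the FDP bound from the martingale bound. -/
lemma determin {Ω : Type*} (p a : ℕ → Ω → ℝ) (H0 : Set ℕ) [DecidablePred (· ∈ H0)]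
    (haval : ∀ k ω, a k ω ∈ Set.Icc (0:ℝ) 1)
    (δ : ℝ) (hδ : δ ∈ Set.Ioo (0:ℝ) 1) (n : ℕ) (hn : 1 ≤ n) (k : ℕ) (ω : Ω)
    (hlt : KRmart (Real.log (1 / (δ / ((Real.pi ^ 2 / 6) * (n : ℝ) ^ 2))) / (n:ℝ))
      p a H0 k ω < 1 / (δ / ((Real.pi ^ 2 / 6) * (n : ℝ) ^ 2))) :
    (((Finset.Icc 1 k).filter (fun i => i ∈ H0 ∧ p i ω ≤ a i ω)).card : ℝ)
      ≤ KRconstOnline δ n * ((n:ℝ) + ∑ i ∈ Finset.Icc 1 k, a i ω) := by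
  classical
  obtain ⟨hκn0, hδa0, hδa1, hL⟩ := constants_facts δ hδ n hn
  set L : ℝ := Real.log (1 / (δ / ((Real.pi ^ 2 / 6) * (n : ℝ) ^ 2))) with hLdef
  set β : ℝ := L / (n:ℝ) with hβdef
  have hn0 : (0:ℝ) < n := by exact_mod_cast hn
  have hβ0 : 0 < β := div_pos hL hn0
  set lam : ℝ := Real.log (1 + β) with hlam
  have hlam0 : 0 < lam := Real.log_pos (by linarith)
  have hexplam : Real.exp lam = 1 + β := Real.exp_log (by linarith)
  set V : ℝ := (((Finset.Icc 1 k).filter (fun i => i ∈ H0 ∧ p i ω ≤ a i ω)).card : ℝ)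
    with hV
  set A : ℝ := ∑ i ∈ Finset.Icc 1 k, a i ω with hA
  set A' : ℝ := ∑ i ∈ Finset.Icc 1 k, (if i ∈ H0 then a i ω else 0) with hA'
  -- the martingale dominates exp(lam V - β A')
  have hkey : Real.exp (lam * V - β * A') = KRmart β p a H0 k ω := by
    have hVsum : V = ∑ i ∈ Finset.Icc 1 k,
        (if (i ∈ H0 ∧ p i ω ≤ a i ω) then (1:ℝ) else 0) := by
      rw [hV, Finset.card_filter]
      push_cast
      rfl
    have hexpand : lam * V - β * A' = ∑ i ∈ Finset.Icc 1 k,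
        (lam * (if (i ∈ H0 ∧ p i ω ≤ a i ω) then (1:ℝ) else 0)
          - β * (if i ∈ H0 then a i ω else 0)) := by
      rw [Finset.sum_sub_distrib, ← Finset.mul_sum, ← Finset.mul_sum, ← hVsum, ← hA']
    rw [hexpand, Real.exp_sum]
    unfold KRmart
    refine Finset.prod_congr rfl fun i _ => ?_
    unfold KRfac
    by_cases hi : i ∈ H0
    · simp only [hi, if_true, true_and]
      by_cases hrej : p i ω ≤ a i ω
      · have hind : Set.indicator {ω' | p i ω' ≤ a i ω'} (fun _ => (1:ℝ)) ω = 1 := by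
          have hmem : ω ∈ {ω' | p i ω' ≤ a i ω'} := hrej
          rw [Set.indicator_of_mem hmem]
        rw [if_pos hrej, hind]
        rw [show lam * 1 - β * a i ω = lam + (-(β * a i ω)) by ring, Real.exp_add, hexplam]
        ring
      · have hind : Set.indicator {ω' | p i ω' ≤ a i ω'} (fun _ => (1:ℝ)) ω = 0 := by
          have hmem : ω ∉ {ω' | p i ω' ≤ a i ω'} := hrej
          rw [Set.indicator_of_notMem hmem]
        rw [if_neg hrej, hind]
        rw [show lam * 0 - β * a i ω = -(β * a i ω) by ring]
        ring
    · simp [hi, Real.exp_zero]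
  -- pass to logs
  have ht : Real.exp L = 1 / (δ / ((Real.pi ^ 2 / 6) * (n : ℝ) ^ 2)) :=
    Real.exp_log (by positivity)
  have hlog : lam * V - β * A' < L := by
    have h1 : Real.exp (lam * V - β * A') < Real.exp L := by
      rw [hkey, ht]; exact hlt
    exact (Real.exp_lt_exp).mp h1
  -- A' ≤ A
  have hA'A : A' ≤ A := by
    refine Finset.sum_le_sum fun i _ => ?_
    by_cases hi : i ∈ H0
    · rw [if_pos hi]
    · rw [if_neg hi]; exact (haval i ω).1
  have hVbound : lam * V ≤ L + β * A := by nlinarith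
  -- convert to the KR constant
  have hKR : KRconstOnline δ n = L / ((n:ℝ) * lam) := rfl
  rw [hKR]
  rw [show L / ((n:ℝ) * lam) * ((n:ℝ) + A) = (L * ((n:ℝ) + A)) / ((n:ℝ) * lam) by ring]
  rw [le_div_iff₀ (by positivity)]
  have hβn : β * (n:ℝ) = L := by
    rw [hβdef]; field_simp
  have h2 : (n:ℝ) * (lam * V) ≤ (n:ℝ) * (L + β * A) :=
    mul_le_mul_of_nonneg_left hVbound hn0.le
  have h3 : β * (n:ℝ) * A = L * A := by rw [hβn]
  nlinarith [h2, h3]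

/-- KR-U confidence envelope in the online setting (Theorem 4.1, KR-U version). -/
theorem KRU_envelope_online
    {Ω : Type*} [MeasureSpace Ω] [IsProbabilityMeasure (ℙ : Measure Ω)]
    (p : ℕ → Ω → ℝ) (a : ℕ → Ω → ℝ) (H0 : Set ℕ) [DecidablePred (· ∈ H0)]
    (hpval : ∀ k ω, p k ω ∈ Set.Icc (0:ℝ) 1)
    (haval : ∀ k ω, a k ω ∈ Set.Icc (0:ℝ) 1)
    (hpmeas : ∀ k, Measurable (p k))
    (hameas : ∀ k, Measurable (a k))
    -- the filtration generated by the past rejection indicators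
    (G : ℕ → MeasurableSpace Ω)
    (hG : ∀ k, G k = MeasurableSpace.generateFrom
        {A | ∃ i, 1 ≤ i ∧ i ≤ k ∧ A = {ω | p i ω ≤ a i ω}})
    -- the critical values are predictable
    (hpred : ∀ k, 1 ≤ k → @Measurable Ω ℝ (G (k - 1)) _ (a k))
    -- conditional super-uniformity of the null p-values
    (hsuper : ∀ k ∈ H0, 1 ≤ k → ∀ x ∈ Set.Icc (0:ℝ) 1,
      ∀ᵐ ω ∂(ℙ : Measure Ω),
        MeasureTheory.condExp (G (k - 1)) ℙ
          (Set.indicator {ω' | p k ω' ≤ x} (fun _ => (1:ℝ))) ω ≤ x)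
    (δ : ℝ) (hδ : δ ∈ Set.Ioo (0:ℝ) 1) :
    1 - δ ≤ (ℙ {ω | ∀ k, 1 ≤ k →
        (((Finset.Icc 1 k).filter (fun i => i ∈ H0 ∧ p i ω ≤ a i ω)).card : ℝ)
            / ((max 1 (((Finset.Icc 1 k).filter (fun i => p i ω ≤ a i ω)).card) : ℕ) : ℝ)
          ≤ min 1 (⨅ n : {n : ℕ // 1 ≤ n},
              KRconstOnline δ (n : ℕ)
                * (((n : ℕ) : ℝ) + ∑ i ∈ Finset.Icc 1 k, a i ω)
                / ((max 1 (((Finset.Icc 1 k).filter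
                    (fun i => p i ω ≤ a i ω)).card) : ℕ) : ℝ))}).toReal := by
  classical
  obtain ⟨hδ0, hδ1⟩ := hδ
  have hle : ∀ k, G k ≤ (inferInstance : MeasurableSpace Ω) := Gle p a G hpmeas hG hpred
  have hMmeas : ∀ (β : ℝ) (k : ℕ), Measurable (KRmart β p a H0 k) := fun β k =>
    (measKRmart p a H0 G β hG hpred k).mono (hle k) le_rfl
  -- the bad events
  set Bad : ℕ → Set Ω := fun n =>
    if n = 0 then ∅ else
      {ω | ∃ j, 1 ≤ j ∧ 1 / (δ / ((Real.pi ^ 2 / 6) * (n : ℝ) ^ 2))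
        ≤ KRmart (Real.log (1 / (δ / ((Real.pi ^ 2 / 6) * (n : ℝ) ^ 2))) / (n:ℝ))
            p a H0 j ω} with hBad
  have hBadmeas : ∀ n, MeasurableSet (Bad n) := by
    intro n
    rw [hBad]
    by_cases hn : n = 0
    · simp [hn]
    · simp only [hn, if_false]
      have : {ω | ∃ j, 1 ≤ j ∧ 1 / (δ / ((Real.pi ^ 2 / 6) * (n : ℝ) ^ 2))
          ≤ KRmart (Real.log (1 / (δ / ((Real.pi ^ 2 / 6) * (n : ℝ) ^ 2))) / (n:ℝ))
              p a H0 j ω}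
          = ⋃ j : ℕ, ⋃ _h : 1 ≤ j, {ω | 1 / (δ / ((Real.pi ^ 2 / 6) * (n : ℝ) ^ 2))
          ≤ KRmart (Real.log (1 / (δ / ((Real.pi ^ 2 / 6) * (n : ℝ) ^ 2))) / (n:ℝ))
              p a H0 j ω} := by
        ext ω; simp
      rw [this]
      exact MeasurableSet.iUnion fun j => MeasurableSet.iUnion fun _ =>
        (hMmeas _ j) measurableSet_Ici
  have hBadμ : ∀ n, (ℙ : Measure Ω) (Bad n)
      ≤ ENNReal.ofReal (δ / ((Real.pi ^ 2 / 6) * (n : ℝ) ^ 2)) := by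
    intro n
    by_cases hn : n = 0
    · subst hn
      simp [hBad]
    · have hn1 : 1 ≤ n := Nat.one_le_iff_ne_zero.mpr hn
      obtain ⟨hκn0, hδa0, hδa1, hL⟩ := constants_facts δ ⟨hδ0, hδ1⟩ n hn1
      have hn0 : (0:ℝ) < n := by exact_mod_cast hn1
      have hβ0 : 0 < Real.log (1 / (δ / ((Real.pi ^ 2 / 6) * (n : ℝ) ^ 2))) / (n:ℝ) :=
        div_pos hL hn0
      have ht0 : 0 < 1 / (δ / ((Real.pi ^ 2 / 6) * (n : ℝ) ^ 2)) := by positivity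
      have := villeKR p a H0 haval hpmeas G hG hpred hsuper
        (Real.log (1 / (δ / ((Real.pi ^ 2 / 6) * (n : ℝ) ^ 2))) / (n:ℝ))
        (1 / (δ / ((Real.pi ^ 2 / 6) * (n : ℝ) ^ 2))) hβ0 ht0
      have heq : 1 / (1 / (δ / ((Real.pi ^ 2 / 6) * (n : ℝ) ^ 2)))
          = δ / ((Real.pi ^ 2 / 6) * (n : ℝ) ^ 2) := one_div_one_div _
      rw [heq] at this
      calc (ℙ : Measure Ω) (Bad n) = (ℙ : Measure Ω)
            {ω | ∃ j, 1 ≤ j ∧ 1 / (δ / ((Real.pi ^ 2 / 6) * (n : ℝ) ^ 2))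
              ≤ KRmart (Real.log (1 / (δ / ((Real.pi ^ 2 / 6) * (n : ℝ) ^ 2))) / (n:ℝ))
                  p a H0 j ω} := by rw [hBad]; simp only [hn, if_false]
        _ ≤ _ := this
  -- summing the bad probabilities
  have hκpos : (0:ℝ) < Real.pi ^ 2 / 6 := by
    have := Real.pi_gt_three; nlinarith
  have hsumR : HasSum (fun n : ℕ => δ / ((Real.pi ^ 2 / 6) * (n:ℝ)^2)) δ := by
    have h0 := hasSum_zeta_two
    have h1 := h0.mul_left (δ / (Real.pi ^ 2 / 6))
    have h2 : (fun n : ℕ => (δ / (Real.pi ^ 2 / 6)) * ((1:ℝ)/(n:ℝ)^2))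
        = fun n : ℕ => δ / ((Real.pi ^ 2 / 6) * (n:ℝ)^2) := by
      funext n
      rw [div_mul_div_comm, mul_one]
    rw [h2] at h1
    have h3 : δ / (Real.pi ^ 2 / 6) * (Real.pi ^ 2 / 6) = δ :=
      div_mul_cancel₀ δ (ne_of_gt hκpos)
    rwa [h3] at h1
  have htsum : ∑' n : ℕ, ENNReal.ofReal (δ / ((Real.pi ^ 2 / 6) * (n:ℝ)^2))
      = ENNReal.ofReal δ := by
    rw [← ENNReal.ofReal_tsum_of_nonneg (fun n => by positivity) hsumR.summable,
      hsumR.tsum_eq]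
  have hBadUμ : (ℙ : Measure Ω) (⋃ n, Bad n) ≤ ENNReal.ofReal δ := by
    calc (ℙ : Measure Ω) (⋃ n, Bad n) ≤ ∑' n, (ℙ : Measure Ω) (Bad n) :=
        measure_iUnion_le _
      _ ≤ ∑' n : ℕ, ENNReal.ofReal (δ / ((Real.pi ^ 2 / 6) * (n:ℝ)^2)) :=
        ENNReal.tsum_le_tsum hBadμ
      _ = ENNReal.ofReal δ := htsum
  -- the good event is contained in the target event
  have hsub : (⋃ n, Bad n)ᶜ ⊆ {ω | ∀ k, 1 ≤ k →
      (((Finset.Icc 1 k).filter (fun i => i ∈ H0 ∧ p i ω ≤ a i ω)).card : ℝ)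
          / ((max 1 (((Finset.Icc 1 k).filter (fun i => p i ω ≤ a i ω)).card) : ℕ) : ℝ)
        ≤ min 1 (⨅ n : {n : ℕ // 1 ≤ n},
            KRconstOnline δ (n : ℕ)
              * (((n : ℕ) : ℝ) + ∑ i ∈ Finset.Icc 1 k, a i ω)
              / ((max 1 (((Finset.Icc 1 k).filter
                  (fun i => p i ω ≤ a i ω)).card) : ℕ) : ℝ))} := by
    intro ω hω
    simp only [Set.mem_compl_iff, Set.mem_iUnion, not_exists] at hω
    intro k hk
    set R : ℕ := ((Finset.Icc 1 k).filter (fun i => p i ω ≤ a i ω)).card with hR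
    set V : ℕ := ((Finset.Icc 1 k).filter (fun i => i ∈ H0 ∧ p i ω ≤ a i ω)).card with hV
    have hden1 : (1:ℝ) ≤ ((max 1 R : ℕ) : ℝ) := by
      have : 1 ≤ max 1 R := le_max_left _ _
      exact_mod_cast this
    have hden0 : (0:ℝ) < ((max 1 R : ℕ) : ℝ) := lt_of_lt_of_le one_pos hden1
    refine le_min ?_ (le_ciInf ?_)
    · -- FDP ≤ 1
      rw [div_le_one hden0]
      have hVR : V ≤ R := by
        refine Finset.card_le_card fun i hi => ?_
        rw [Finset.mem_filter] at hi ⊢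
        exact ⟨hi.1, hi.2.2⟩
      have : V ≤ max 1 R := hVR.trans (le_max_right _ _)
      exact_mod_cast this
    · -- the KR bound for each n
      rintro ⟨n, hn1⟩
      simp only
      rw [div_le_div_iff_of_pos_right hden0]
      have hωn := hω n
      rw [hBad] at hωn
      simp only [Nat.pos_iff_ne_zero.mp (lt_of_lt_of_le one_pos hn1), if_false] at hωn
      have hωn' : ∀ j, 1 ≤ j → KRmart
          (Real.log (1 / (δ / ((Real.pi ^ 2 / 6) * (n : ℝ) ^ 2))) / (n:ℝ)) p a H0 j ω
          < 1 / (δ / ((Real.pi ^ 2 / 6) * (n : ℝ) ^ 2)) := by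
        intro j hj
        by_contra hcon
        push_neg at hcon
        exact hωn ⟨j, hj, hcon⟩
      exact determin p a H0 haval δ ⟨hδ0, hδ1⟩ n hn1 k ω (hωn' k hk)
  -- conclude
  have hBadUmeas : MeasurableSet (⋃ n, Bad n) := MeasurableSet.iUnion hBadmeas
  have hb : ((ℙ : Measure Ω) (⋃ n, Bad n)).toReal ≤ δ := by
    calc ((ℙ : Measure Ω) (⋃ n, Bad n)).toReal
        ≤ (ENNReal.ofReal δ).toReal := ENNReal.toReal_mono ENNReal.ofReal_ne_top hBadUμ
      _ = δ := ENNReal.toReal_ofReal hδ0.le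
  have hcompl : ((ℙ : Measure Ω) (⋃ n, Bad n)ᶜ).toReal
      = 1 - ((ℙ : Measure Ω) (⋃ n, Bad n)).toReal := by
    rw [prob_compl_eq_one_sub hBadUmeas]
    rw [ENNReal.toReal_sub_of_le prob_le_one ENNReal.one_ne_top]
    simp
  have hfinal : ((ℙ : Measure Ω) (⋃ n, Bad n)ᶜ).toReal
      ≤ ((ℙ : Measure Ω) {ω | ∀ k, 1 ≤ k →
        (((Finset.Icc 1 k).filter (fun i => i ∈ H0 ∧ p i ω ≤ a i ω)).card : ℝ)
            / ((max 1 (((Finset.Icc 1 k).filter (fun i => p i ω ≤ a i ω)).card) : ℕ) : ℝ)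
          ≤ min 1 (⨅ n : {n : ℕ // 1 ≤ n},
              KRconstOnline δ (n : ℕ)
                * (((n : ℕ) : ℝ) + ∑ i ∈ Finset.Icc 1 k, a i ω)
                / ((max 1 (((Finset.Icc 1 k).filter
                    (fun i => p i ω ≤ a i ω)).card) : ℕ) : ℝ))}).toReal :=
    ENNReal.toReal_mono (measure_ne_top _ _) (measure_mono hsub)
  linarith [hb, hcompl, hfinal]
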